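/- Let H = (V, ℰ) be a hypergraph and let B(H) be its Bachman diagram with node set 𝒳. Then every node 𝔛 ∈ 𝒳 such that no hyperedge E ∈ ℰ satisfies E = 𝔛 has in-degree at least 2 in B(H); that is, there exist at least two distinct nodes 𝔜 ∈ 𝒳 with an edge from 𝔜 to 𝔛. -/

import Mathlib

open SimpleGraph

/-- The node set of the Bachman diagram of a hypergraph: all nonempty sets obtainable as
the intersection of the hyperedges of a nonempty subfamily. -/
def BachmanNodes {V ι : Type*} [DecidableEq V] (E : ι → Finset V) : Set (Finset V) :=
  {X | X.Nonempty ∧ ∃ (s : Finset ι) (hs : s.Nonempty), X = s.inf' hs E}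

/-- The edge relation of the Bachman diagram: there is an edge from `X` to `Y` iff
`X ⊋ Y` and no node `Z` satisfies `X ⊋ Z ⊋ Y`. -/
def BachmanEdge {V ι : Type*} [DecidableEq V] (E : ι → Finset V) (X Y : Finset V) : Prop :=
  X ∈ BachmanNodes E ∧ Y ∈ BachmanNodes E ∧ Y ⊂ X ∧
    ¬∃ Z ∈ BachmanNodes E, Z ⊂ X ∧ Y ⊂ Z

open Classical in
lemma bachman_exists_min {V ι : Type*} [Fintype V] [DecidableEq V] (E : ι → Finset V)
    (X W : Finset V) (hW : W ∈ BachmanNodes E) (hXW : X ⊂ W) :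
    ∃ Y ∈ BachmanNodes E, X ⊂ Y ∧ Y ⊆ W ∧
      ∀ Z ∈ BachmanNodes E, X ⊂ Z → ¬ Z ⊂ Y := by
  classical
  let T : Finset (Finset V) :=
    Finset.univ.filter (fun Z => Z ∈ BachmanNodes E ∧ X ⊂ Z ∧ Z ⊆ W)
  have hWT : W ∈ T := by simp [T, hW, hXW]
  obtain ⟨m, hmT, hmin⟩ : ∃ m ∈ T, ∀ x ∈ T, ¬x < m := by
    obtain ⟨m, hm⟩ := Finset.exists_minimal (s := T) ⟨W, hWT⟩
    exact ⟨m, hm.1, fun x hx hlt => hlt.not_ge (hm.2 hx hlt.le)⟩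
  simp only [T, Finset.mem_filter, Finset.mem_univ, true_and] at hmT
  refine ⟨m, hmT.1, hmT.2.1, hmT.2.2, fun Z hZ hXZ hZm => ?_⟩
  exact hmin Z (by simp [T, hZ, hXZ, hZm.subset.trans hmT.2.2]) hZm

/-- Every node `X` of the Bachman diagram of a hypergraph `H` such
that no hyperedge of `H` equals `X` has in-degree at least `2`: there are two distinct
nodes `Y₁ ≠ Y₂` with edges from `Y₁` to `X` and from `Y₂` to `X`. -/
theorem stmt15 {V ι : Type*} [Fintype V] [Fintype ι] [DecidableEq V]
    (E : ι → Finset V)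
    (hne : ∀ i, (E i).Nonempty) (hcov : ∀ v, ∃ i, v ∈ E i)
    (X : Finset V) (hX : X ∈ BachmanNodes E) (hnotEdge : ∀ i, E i ≠ X) :
    ∃ Y₁ Y₂ : Finset V, Y₁ ≠ Y₂ ∧ BachmanEdge E Y₁ X ∧ BachmanEdge E Y₂ X := by
  obtain ⟨hXne, s, hs, hXeq⟩ := hX
  have hnode : ∀ i, E i ∈ BachmanNodes E := fun i =>
    ⟨hne i, {i}, Finset.singleton_nonempty i, (Finset.inf'_singleton ..).symm⟩
  have hsub : ∀ i ∈ s, X ⊂ E i := fun i hi =>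
    lt_of_le_of_ne (hXeq ▸ Finset.inf'_le E hi) fun h => hnotEdge i h.symm
  obtain ⟨i₀, hi₀⟩ := hs
  obtain ⟨Y₁, hY₁, hXY₁, hY₁W, hmin₁⟩ :=
    bachman_exists_min E X (E i₀) (hnode i₀) (hsub i₀ hi₀)
  have : ¬ ∀ i ∈ s, Y₁ ⊆ E i := by
    intro h
    exact hXY₁.2 (hXeq ▸ Finset.le_inf' ⟨i₀, hi₀⟩ E h)
  push_neg at this
  obtain ⟨i₁, hi₁, hY₁i₁⟩ := this
  obtain ⟨Y₂, hY₂, hXY₂, hY₂W, hmin₂⟩ :=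
    bachman_exists_min E X (E i₁) (hnode i₁) (hsub i₁ hi₁)
  refine ⟨Y₁, Y₂, fun h => hY₁i₁ (h ▸ hY₂W), ?_, ?_⟩
  · exact ⟨hY₁, ⟨hXne, s, ⟨i₀, hi₀⟩, hXeq⟩, hXY₁,
      fun ⟨Z, hZ, hZY, hXZ⟩ => hmin₁ Z hZ hXZ hZY⟩
  · exact ⟨hY₂, ⟨hXne, s, ⟨i₀, hi₀⟩, hXeq⟩, hXY₂,
      fun ⟨Z, hZ, hZY, hXZ⟩ => hmin₂ Z hZ hXZ hZY⟩
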